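/- arXiv:1412.0531 — 3 statements merged into one kernel-verified Lean document; each statement's English description precedes it below -/
import Mathlib

section
/- Let n ≥ 1, let f : ℝⁿ → ℝ be differentiable, let B : ℝⁿ → End(ℝⁿ) be any map, and define K : ℝⁿ × ℝⁿ → ℝ by K(q,p) := f(q). Fix (q₀,p₀) ∈ ℝⁿ × ℝⁿ and set q(t) := q₀ and p(t) := p₀ − t∇f(q₀). Then for every t ∈ ℝ the curve (q(t),p(t)) satisfies the twisted Hamilton equations q̇(t) = ∇_p K(q(t),p(t)) and ṗ(t) = −∇_q K(q(t),p(t)) − B(q(t)) ∇_p K(q(t),p(t)). In particular, the twisted Hamiltonian flow of the function f∘π is the fibrewise translation Φ_t(q,p) = (q, p − t∇f(q)), independently of the magnetic field B. -/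
open scoped RealInnerProductSpace

/-- The Lemma of Section 6 of the paper: for `K(q,p) = f(q)`, the curve
`t ↦ (q₀, p₀ - t∇f(q₀))` solves the twisted Hamilton equations
`q̇ = ∇_p K`, `ṗ = -∇_q K - B(q)∇_p K`, for any magnetic field `B`.
Hence the twisted Hamiltonian flow of `f ∘ π` is the fibrewise translation
`Φ_t(q,p) = (q, p - t∇f(q))`, independently of `B`. -/
theorem twisted_flow_of_basic_hamiltonian_is_fibrewise_translation
    (n : ℕ) (hn : 1 ≤ n)
    (f : EuclideanSpace ℝ (Fin n) → ℝ)
    (hf : Differentiable ℝ f)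
    (B : EuclideanSpace ℝ (Fin n) →
      EuclideanSpace ℝ (Fin n) →L[ℝ] EuclideanSpace ℝ (Fin n))
    (K : EuclideanSpace ℝ (Fin n) × EuclideanSpace ℝ (Fin n) → ℝ)
    (hK : ∀ q p : EuclideanSpace ℝ (Fin n), K (q, p) = f q)
    (q₀ p₀ : EuclideanSpace ℝ (Fin n))
    (q p : ℝ → EuclideanSpace ℝ (Fin n))
    (hq : q = fun _ => q₀)
    (hp : p = fun t => p₀ - t • gradient f q₀) :
    ∀ t : ℝ,
      deriv q t = gradient (fun p' => K (q t, p')) (p t) ∧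
      deriv p t =
        -gradient (fun q' => K (q', p t)) (q t)
          - B (q t) (gradient (fun p' => K (q t, p')) (p t)) := by
  intro t
  subst hq hp
  have hKp : (fun p' => K (q₀, p')) = fun _ => f q₀ := by
    funext p'; exact hK q₀ p'
  have hKq : (fun q' => K (q', p₀ - t • gradient f q₀)) = f := by
    funext q'; exact hK q' _
  have hgradp : gradient (fun p' => K (q₀, p')) (p₀ - t • gradient f q₀) = 0 := by
    rw [hKp]; exact gradient_const _ _
  constructor
  · simpa [hgradp] using deriv_const t q₀
  · rw [hKq, hgradp]
    have : deriv (fun t : ℝ => p₀ - t • gradient f q₀) t = -gradient f q₀ := by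
      have h1 : HasDerivAt (fun t : ℝ => p₀ - t • gradient f q₀)
          (0 - (1 : ℝ) • gradient f q₀) t := by
        exact ((hasDerivAt_const t p₀).sub ((hasDerivAt_id t).smul_const _))
      simpa using h1.deriv
    simp [this]
end

section
/- Let F be a real normed vector space, X a set, H : X × F → ℝ a function, v : X → F a map, and constants H₀ > 0, H₁ ∈ ℝ, B ≥ 0, ε > 0, k ∈ ℝ. Assume: (i) H(q,p) ≥ H₀‖p‖ − H₁ for all (q,p); (ii) whenever H(q,p) ≤ k one has ‖p‖ ≤ B; (iii) ‖v(q)‖ ≥ ε for every q ∈ X for which there exists p with H(q,p) ≤ k. Then for every T > (k + H₁ + H₀B)/(H₀ε) and every (q,p) with H(q,p) ≤ k, one has H(q, p − T·v(q)) > k. -/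
/-- The key estimate in the proof of Theorem 1.4 of the paper: if `H` is
superlinear in the fibre, the sublevel `{H ≤ k}` is bounded in the fibre by
`B`, and `‖v(q)‖ ≥ ε` over the projection of the sublevel set, then for
`T > (k + H₁ + H₀B)/(H₀ε)` the fibrewise translation by `-T·v(q)` pushes the
sublevel set `{H ≤ k}` entirely outside of itself. -/
theorem fibrewise_translation_displaces_sublevel
    {F : Type*} [NormedAddCommGroup F] [NormedSpace ℝ F] {X : Type*}
    (H : X → F → ℝ) (v : X → F)
    (H₀ H₁ B ε k : ℝ)
    (hH₀ : 0 < H₀) (hB : 0 ≤ B) (hε : 0 < ε)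
    (hsuper : ∀ (q : X) (p : F), H₀ * ‖p‖ - H₁ ≤ H q p)
    (hbounded : ∀ (q : X) (p : F), H q p ≤ k → ‖p‖ ≤ B)
    (hv : ∀ q : X, (∃ p : F, H q p ≤ k) → ε ≤ ‖v q‖) :
    ∀ T : ℝ, (k + H₁ + H₀ * B) / (H₀ * ε) < T →
      ∀ (q : X) (p : F), H q p ≤ k → k < H q (p - T • v q) := by
  intro T hT q p hp
  have hvq : ε ≤ ‖v q‖ := hv q ⟨p, hp⟩
  have hpB : ‖p‖ ≤ B := hbounded q p hp
  have hk : 0 ≤ k + H₁ := by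
    have := hsuper q p
    nlinarith [norm_nonneg p]
  have hTpos : 0 < T := lt_of_le_of_lt (by positivity) hT
  have hT' : k + H₁ + H₀ * B < T * (H₀ * ε) :=
    (div_lt_iff₀ (by positivity)).mp hT
  have hnorm : T * ε - B ≤ ‖p - T • v q‖ := by
    have h1 : ‖T • v q‖ - ‖p‖ ≤ ‖p - T • v q‖ := by
      have := norm_sub_norm_le (T • v q) p
      rw [norm_sub_rev]; linarith [norm_sub_rev p (T • v q) ▸ this]
    have h2 : T * ε ≤ ‖T • v q‖ := by
      rw [norm_smul, Real.norm_eq_abs, abs_of_pos hTpos]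
      exact mul_le_mul_of_nonneg_left hvq hTpos.le
    linarith
  have := hsuper q (p - T • v q)
  nlinarith
end

section
/- Let 𝓗 be a real Hilbert space, v : 𝓗 → 𝓗 a continuous map, R > 0, and let u : [0,R] → 𝓗 be a differentiable curve satisfying u'(r) = −v(u(r))/√(1 + ‖v(u(r))‖²) for every r ∈ [0,R]. Then ‖u(R) − u(0)‖² ≤ R · ∫₀ᴿ (−⟨v(u(r)), u'(r)⟩) dr. -/
open scoped RealInnerProductSpace
open MeasureTheory Set

/-- Hilbert-space version of Lemma 2.7 of the paper: along a flow line of the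
normalized negative gradient vector field `u' = -v(u)/√(1+‖v(u)‖²)`, the
squared distance between the endpoints is bounded by the elapsed time times
minus the action variation `∫₀ᴿ -⟨v(u), u'⟩`. -/
theorem dist_sq_le_time_mul_action_variation
    {𝓗 : Type*} [NormedAddCommGroup 𝓗] [InnerProductSpace ℝ 𝓗]
    (v : 𝓗 → 𝓗) (hv : Continuous v)
    (R : ℝ) (hR : 0 < R)
    (u : ℝ → 𝓗)
    (hu : ∀ r ∈ Set.Icc (0:ℝ) R,
      HasDerivAt u ((-(1 / Real.sqrt (1 + ‖v (u r)‖ ^ 2))) • v (u r)) r) :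
    ‖u R - u 0‖ ^ 2 ≤ R * ∫ r in (0:ℝ)..R, -⟪v (u r), deriv u r⟫ := by
  set F : ℝ → 𝓗 := fun r => (-(1 / Real.sqrt (1 + ‖v (u r)‖ ^ 2))) • v (u r) with hF
  have hsq : ∀ x : 𝓗, (Real.sqrt (1 + ‖x‖ ^ 2)) ^ 2 = 1 + ‖x‖ ^ 2 :=
    fun x => Real.sq_sqrt (by positivity)
  have hs1 : ∀ x : 𝓗, 1 ≤ Real.sqrt (1 + ‖x‖ ^ 2) := fun x => by
    nlinarith [hsq x, Real.sqrt_nonneg (1 + ‖x‖ ^ 2)]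
  -- norm of F
  have hFnorm : ∀ r, ‖F r‖ = (1 / Real.sqrt (1 + ‖v (u r)‖ ^ 2)) * ‖v (u r)‖ := by
    intro r
    rw [hF, norm_smul, norm_neg, Real.norm_eq_abs,
      abs_of_nonneg (by positivity : (0:ℝ) ≤ 1 / Real.sqrt (1 + ‖v (u r)‖ ^ 2))]
  have hF1 : ∀ r, ‖F r‖ ≤ 1 := by
    intro r
    rw [hFnorm r]
    have h1 := hs1 (v (u r))
    have h2 := hsq (v (u r))
    have h3 := Real.sqrt_nonneg (1 + ‖v (u r)‖ ^ 2)
    have hxle : ‖v (u r)‖ ≤ Real.sqrt (1 + ‖v (u r)‖ ^ 2) := by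
      nlinarith [norm_nonneg (v (u r))]
    rw [one_div, inv_mul_le_iff₀ (by linarith)]
    linarith
  have hFsq : ∀ r, ‖F r‖ ^ 2 ≤ -⟪v (u r), F r⟫ := by
    intro r
    have hinner : ⟪v (u r), F r⟫ =
        (-(1 / Real.sqrt (1 + ‖v (u r)‖ ^ 2))) * ‖v (u r)‖ ^ 2 := by
      rw [hF, real_inner_smul_right, real_inner_self_eq_norm_sq]
    rw [hinner, hFnorm r]
    have h1 := hs1 (v (u r))
    have hc : 1 / Real.sqrt (1 + ‖v (u r)‖ ^ 2) ≤ 1 := by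
      rw [div_le_one (by linarith)]; linarith
    have hc0 : 0 ≤ 1 / Real.sqrt (1 + ‖v (u r)‖ ^ 2) := by positivity
    have hcc : (1 / Real.sqrt (1 + ‖v (u r)‖ ^ 2)) ^ 2 ≤ 1 / Real.sqrt (1 + ‖v (u r)‖ ^ 2) := by
      nlinarith
    nlinarith [mul_nonneg (sub_nonneg.mpr hcc) (sq_nonneg (‖v (u r)‖))]
  -- continuity
  have hucont : ContinuousOn u (Icc 0 R) := fun r hr =>
    ((hu r hr).continuousAt).continuousWithinAt
  have hvu : ContinuousOn (fun r => v (u r)) (Icc 0 R) := hv.comp_continuousOn hucont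
  have hscont : ContinuousOn (fun r => Real.sqrt (1 + ‖v (u r)‖ ^ 2)) (Icc 0 R) :=
    Real.continuous_sqrt.comp_continuousOn (continuousOn_const.add (hvu.norm.pow 2))
  have hsne : ∀ r ∈ Icc (0:ℝ) R, Real.sqrt (1 + ‖v (u r)‖ ^ 2) ≠ 0 := by
    intro r _; have := hs1 (v (u r)); linarith
  have hFcont : ContinuousOn F (Icc 0 R) :=
    ((continuousOn_const.div hscont hsne).neg).smul hvu
  have hFint : IntervalIntegrable F MeasureTheory.volume 0 R := by
    apply ContinuousOn.intervalIntegrable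
    rwa [Set.uIcc_of_le hR.le]
  -- fundamental theorem of calculus for the scalar function ⟪w, u r⟫
  set w : 𝓗 := u R - u 0 with hwdef
  have hinnercont : ContinuousOn (fun r => ⟪w, F r⟫) (Icc 0 R) :=
    continuousOn_const.inner hFcont
  have key : ∫ r in (0:ℝ)..R, ⟪w, F r⟫ = ‖w‖ ^ 2 := by
    have h := intervalIntegral.integral_eq_sub_of_hasDerivAt
      (f := fun r => ⟪w, u r⟫) (f' := fun r => ⟪w, F r⟫)
      (fun r hr => by
        rw [Set.uIcc_of_le hR.le] at hr
        simpa only [inner_zero_left, add_zero] using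
          (hasDerivAt_const r w).inner ℝ (hu r hr))
      (by
        apply ContinuousOn.intervalIntegrable
        rwa [Set.uIcc_of_le hR.le])
    rw [h, ← inner_sub_right, ← hwdef, real_inner_self_eq_norm_sq]
  -- rewrite the deriv in the goal
  have hcongr : (∫ r in (0:ℝ)..R, -⟪v (u r), deriv u r⟫)
      = ∫ r in (0:ℝ)..R, -⟪v (u r), F r⟫ := by
    apply intervalIntegral.integral_congr
    intro r hr
    rw [Set.uIcc_of_le hR.le] at hr
    simp only [(hu r hr).deriv]; rfl
  rw [hcongr]
  -- set integrals on Ioc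
  set I1 : ℝ := ∫ r in Ioc (0:ℝ) R, ‖F r‖ with hI1
  set I2 : ℝ := ∫ r in Ioc (0:ℝ) R, ‖F r‖ ^ 2 with hI2
  set I3 : ℝ := ∫ r in Ioc (0:ℝ) R, -⟪v (u r), F r⟫ with hI3
  have hIoc : Ioc (0:ℝ) R ⊆ Icc 0 R := Ioc_subset_Icc_self
  have hstepA : ‖w‖ ^ 2 ≤ ‖w‖ * I1 := by
    rw [← key, intervalIntegral.integral_of_le hR.le, hI1, ← integral_const_mul]
    apply setIntegral_mono_on
    · exact (hinnercont.integrableOn_Icc).mono_set hIoc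
    · exact ((continuousOn_const.mul (hFcont.norm)).integrableOn_Icc).mono_set hIoc
    · exact measurableSet_Ioc
    · exact fun r _ => real_inner_le_norm w (F r)
  -- Hölder / Cauchy–Schwarz
  haveI : IsFiniteMeasure (MeasureTheory.volume.restrict (Ioc (0:ℝ) R)) := by
    constructor
    rw [Measure.restrict_apply_univ, Real.volume_Ioc]
    exact ENNReal.ofReal_lt_top
  have hmeas : AEStronglyMeasurable (fun r => ‖F r‖)
      (MeasureTheory.volume.restrict (Ioc (0:ℝ) R)) :=
    ((hFcont.mono hIoc).norm).aestronglyMeasurable measurableSet_Ioc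
  have hmem : MemLp (fun r => ‖F r‖) (ENNReal.ofReal 2)
      (MeasureTheory.volume.restrict (Ioc (0:ℝ) R)) :=
    MemLp.of_bound hmeas 1 (Filter.Eventually.of_forall (fun r => by
      simpa [Real.norm_eq_abs, abs_of_nonneg (norm_nonneg (F r))] using hF1 r))
  have hmem1 : MemLp (fun _ : ℝ => (1:ℝ)) (ENNReal.ofReal 2)
      (MeasureTheory.volume.restrict (Ioc (0:ℝ) R)) := memLp_const 1
  have hpq : Real.HolderConjugate 2 2 := Real.HolderConjugate.two_two
  have holder := MeasureTheory.integral_mul_le_Lp_mul_Lq_of_nonneg hpq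
    (Filter.Eventually.of_forall (fun r => norm_nonneg (F r)))
    (Filter.Eventually.of_forall (fun _ => zero_le_one)) hmem hmem1
  have hI2nonneg : 0 ≤ I2 :=
    setIntegral_nonneg measurableSet_Ioc (fun r _ => sq_nonneg _)
  have hconst : (∫ _ in Ioc (0:ℝ) R, (1:ℝ) ^ (2:ℝ)) = R := by
    simp [Measure.restrict_apply_univ, Real.volume_Ioc, hR.le,
      ENNReal.toReal_ofReal hR.le]
  have hrpow : (∫ r in Ioc (0:ℝ) R, ‖F r‖ ^ (2:ℝ)) = I2 := by
    rw [hI2]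
    apply setIntegral_congr_fun measurableSet_Ioc
    intro r _
    show ‖F r‖ ^ (2:ℝ) = ‖F r‖ ^ (2:ℕ)
    rw [show ((2:ℝ)) = ((2:ℕ):ℝ) by norm_num, Real.rpow_natCast]
  have hstepB : I1 ^ 2 ≤ R * I2 := by
    have h2 : I1 ≤ I2 ^ ((1:ℝ)/2) * R ^ ((1:ℝ)/2) := by
      calc I1 = ∫ r in Ioc (0:ℝ) R, ‖F r‖ * 1 := by simp [hI1]
        _ ≤ (∫ r in Ioc (0:ℝ) R, ‖F r‖ ^ (2:ℝ)) ^ ((1:ℝ)/2)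
            * (∫ _ in Ioc (0:ℝ) R, (1:ℝ) ^ (2:ℝ)) ^ ((1:ℝ)/2) := holder
        _ = I2 ^ ((1:ℝ)/2) * R ^ ((1:ℝ)/2) := by rw [hrpow, hconst]
    rw [← Real.sqrt_eq_rpow, ← Real.sqrt_eq_rpow] at h2
    have hI1nonneg : 0 ≤ I1 :=
      setIntegral_nonneg measurableSet_Ioc (fun r _ => norm_nonneg _)
    nlinarith [Real.sq_sqrt hI2nonneg, Real.sq_sqrt hR.le,
      Real.sqrt_nonneg I2, Real.sqrt_nonneg R]
  have hstepC : I2 ≤ I3 := by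
    apply setIntegral_mono_on
    · exact ((hFcont.norm.pow 2).integrableOn_Icc).mono_set hIoc
    · exact (((hvu.inner hFcont).neg).integrableOn_Icc).mono_set hIoc
    · exact measurableSet_Ioc
    · exact fun r _ => hFsq r
  rw [intervalIntegral.integral_of_le hR.le]
  by_cases hw0 : w = 0
  · have h0 : ‖w‖ ^ 2 = 0 := by rw [hw0]; simp
    rw [h0]
    exact mul_nonneg hR.le (le_trans hI2nonneg hstepC)
  · have hwpos : 0 < ‖w‖ := norm_pos_iff.mpr hw0
    have hwle : ‖w‖ ≤ I1 := by
      have := hstepA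
      nlinarith
    calc ‖w‖ ^ 2 ≤ I1 ^ 2 := by nlinarith
      _ ≤ R * I2 := hstepB
      _ ≤ R * I3 := mul_le_mul_of_nonneg_left hstepC hR.le
end
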